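/- Let u be a form satisfying H_q(Φ u) + Ψ u + B(x^{-1} u (h_q u)) = 0, and let a ∈ ℂ, a ≠ 0. Then the shifted form û = h_{a^{-1}} u satisfies H_q(Φ̂ û) + Ψ̂ û + B̂(x^{-1} û (h_q û)) = 0, where Φ̂(x) = a^{-deg Φ} Φ(ax), Ψ̂(x) = a^{1-deg Φ} Ψ(ax), and B̂(x) = a^{-deg Φ} B(ax). -/

import Mathlib

open Polynomial

noncomputable section

namespace QLH

/-- A *form*: a linear functional on ℂ[x]. -/
abbrev PForm : Type := Polynomial ℂ →ₗ[ℂ] ℂ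

private lemma divByMonic_add (d f g : Polynomial ℂ) (hd : d.Monic) :
    (f + g) /ₘ d = f /ₘ d + g /ₘ d := by
  apply mul_left_cancel₀ hd.ne_zero
  have h1 : d * (f /ₘ d) = f - f %ₘ d := by
    rw [Polynomial.modByMonic_eq_sub_mul_div f d]; ring
  have h2 : d * (g /ₘ d) = g - g %ₘ d := by
    rw [Polynomial.modByMonic_eq_sub_mul_div g d]; ring
  have h3 : d * ((f + g) /ₘ d) = (f + g) - (f + g) %ₘ d := by
    rw [Polynomial.modByMonic_eq_sub_mul_div (f + g) d]; ring
  rw [mul_add, h1, h2, h3, Polynomial.add_modByMonic]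
  ring

private lemma divByMonic_smul (d f : Polynomial ℂ) (a : ℂ) (hd : d.Monic) :
    (a • f) /ₘ d = a • (f /ₘ d) := by
  apply mul_left_cancel₀ hd.ne_zero
  have h1 : d * (f /ₘ d) = f - f %ₘ d := by
    rw [Polynomial.modByMonic_eq_sub_mul_div f d]; ring
  have h3 : d * ((a • f) /ₘ d) = (a • f) - (a • f) %ₘ d := by
    rw [Polynomial.modByMonic_eq_sub_mul_div (a • f) d]; ring
  rw [h3, Polynomial.smul_modByMonic, mul_smul_comm, h1, smul_sub]

/-- `(h_a f)(x) = f (a x)`. -/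
def hP (a : ℂ) : Polynomial ℂ →ₗ[ℂ] Polynomial ℂ :=
  (Polynomial.aeval (Polynomial.C a * Polynomial.X : Polynomial ℂ)).toLinearMap

/-- `(θ_c f)(x) = (f(x) - f(c))/(x - c)`. -/
def thetaP (c : ℂ) : Polynomial ℂ →ₗ[ℂ] Polynomial ℂ where
  toFun f := (f - C (f.eval c)) /ₘ (X - C c)
  map_add' f g := by
    have h : f + g - C ((f + g).eval c)
        = (f - C (f.eval c)) + (g - C (g.eval c)) := by
      simp only [eval_add, C_add]; ring
    rw [h, divByMonic_add _ _ _ (monic_X_sub_C c)]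
  map_smul' a f := by
    have h : a • f - C ((a • f).eval c) = a • (f - C (f.eval c)) := by
      simp only [eval_smul, smul_eq_mul, smul_sub, Polynomial.smul_C]
    rw [h, divByMonic_smul _ _ _ (monic_X_sub_C c)]
    rfl

/-- `(H_q f)(x) = (f(qx) - f(x))/((q-1)x)`. -/
def HqP (q : ℂ) : Polynomial ℂ →ₗ[ℂ] Polynomial ℂ :=
  (q - 1)⁻¹ • (thetaP 0 ∘ₗ (hP q - LinearMap.id))

/-- `⟨h_a u, f⟩ = ⟨u, h_a f⟩`. -/
def hF (a : ℂ) (u : PForm) : PForm := u ∘ₗ hP a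

/-- `⟨H_q u, f⟩ = -⟨u, H_q f⟩`. -/
def HqF (q : ℂ) (u : PForm) : PForm := -(u ∘ₗ HqP q)

/-- `⟨g u, f⟩ = ⟨u, g f⟩`. -/
def mF (g : Polynomial ℂ) (u : PForm) : PForm := u ∘ₗ LinearMap.mulLeft ℂ g

/-- `⟨(x - c)⁻¹ u, f⟩ = ⟨u, θ_c f⟩`. -/
def divF (c : ℂ) (u : PForm) : PForm := u ∘ₗ thetaP c

/-- The Dirac form `δ_c`. -/
def deltaF (c : ℂ) : PForm := Polynomial.leval c

/-- Kernel used in the left product of a form by a polynomial. -/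
def kern (u : PForm) (j : ℕ) : Polynomial ℂ :=
  ∑ i ∈ Finset.range (j + 1), C (u (X ^ (j - i))) * X ^ i

/-- The left product `f ↦ u f`, `(uf)(x) = ⟨u_ζ, (x f(x) - ζ f(ζ))/(x - ζ)⟩`. -/
def lmul (u : PForm) : Polynomial ℂ →ₗ[ℂ] Polynomial ℂ where
  toFun f := f.sum fun j a => a • kern u j
  map_add' f g :=
    Polynomial.sum_add_index f g _ (fun i => zero_smul ℂ _) fun i b₁ b₂ => add_smul b₁ b₂ _
  map_smul' a f := by
    rw [Polynomial.sum_smul_index f a (fun j b => b • kern u j) fun i => zero_smul ℂ _]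
    simp only [Polynomial.sum_def, mul_smul, ← Finset.smul_sum]
    rfl

/-- The Cauchy product of two forms: `⟨uv, f⟩ = ⟨u, v f⟩`. -/
def cF (u v : PForm) : PForm := u ∘ₗ lmul v

/-- The q-difference equation `H_q(Φu) + Ψu + B(x⁻¹ u (h_q u)) = 0`. -/
def LHeq (q : ℂ) (u : PForm) (Φ Ψ B : Polynomial ℂ) : Prop :=
  HqF q (mF Φ u) + mF Ψ u + mF B (divF 0 (cF u (hF q u))) = 0

/-- A form is regular when it possesses a MOPS. -/
def IsRegular (u : PForm) : Prop :=
  ∃ P : ℕ → Polynomial ℂ, (∀ n, (P n).Monic) ∧ (∀ n, (P n).natDegree = n) ∧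
    (∀ n, u (P n * P n) ≠ 0) ∧ ∀ m n, m ≠ n → u (P m * P n) = 0

/-- A regular form is q-semiclassical when it satisfies `H_q(Φu) + Ψu = 0`, `Φ` monic. -/
def IsSemiclassical (q : ℂ) (u : PForm) : Prop :=
  IsRegular u ∧ ∃ Φ Ψ : Polynomial ℂ, Φ.Monic ∧ HqF q (mF Φ u) + mF Ψ u = 0

/-- A regular form is q-Laguerre–Hahn when it satisfies some equation `LHeq`. -/
def IsLaguerreHahn (q : ℂ) (u : PForm) : Prop :=
  IsRegular u ∧ ∃ Φ Ψ B : Polynomial ℂ, Φ.Monic ∧ LHeq q u Φ Ψ B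

/-- `u` is of class `s`: `s` is the minimum of `max (deg Ψ - 1) (max (deg Φ) (deg B) - 2)`
over all q-difference equations `LHeq q u Φ Ψ B` (`Φ` monic) satisfied by `u`. -/
def HasClass (q : ℂ) (u : PForm) (s : ℕ) : Prop :=
  (∃ Φ Ψ B : Polynomial ℂ, Φ.Monic ∧ LHeq q u Φ Ψ B ∧
      Φ.natDegree ≤ s + 2 ∧ B.natDegree ≤ s + 2 ∧ Ψ.natDegree ≤ s + 1) ∧
  ∀ t : ℕ, (∃ Φ Ψ B : Polynomial ℂ, Φ.Monic ∧ LHeq q u Φ Ψ B ∧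
      Φ.natDegree ≤ t + 2 ∧ B.natDegree ≤ t + 2 ∧ Ψ.natDegree ≤ t + 1) → s ≤ t

/-- Formal Stieltjes series `S(u)(z) = -∑ (u)_n z^{-n-1}`, as a formal Laurent
series in the variable `T = z⁻¹`. -/
def Sf (u : PForm) : LaurentSeries ℂ :=
  HahnSeries.ofPowerSeries ℤ ℂ (PowerSeries.mk fun n => if n = 0 then 0 else -u (X ^ (n - 1)))

/-- A polynomial `f(z)`, viewed as a formal Laurent series in `T = z⁻¹`. -/
def toLS (f : Polynomial ℂ) : LaurentSeries ℂ :=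
  ∑ j ∈ Finset.range (f.natDegree + 1), HahnSeries.single (-(j : ℤ)) (f.coeff j)

/-- The Laurent series `z` (in the variable `T = z⁻¹`). -/
def zLS : LaurentSeries ℂ := HahnSeries.single (-1 : ℤ) 1

/-- `(h_a F)(z) = F(az)` on formal Laurent series in `T = z⁻¹`. -/
def hLS (a : ℂ) (F : LaurentSeries ℂ) : LaurentSeries ℂ where
  coeff := fun k => a ^ (-k) * F.coeff k
  isPWO_support' := F.isPWO_support'.mono fun k hk => by
    simp only [Function.mem_support] at hk ⊢
    exact fun h => hk (by rw [h, mul_zero])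

/-- `(H_q F)(z) = (F(qz) - F(z))/((q-1)z)` on formal Laurent series in `T = z⁻¹`. -/
def HqLS (q : ℂ) (F : LaurentSeries ℂ) : LaurentSeries ℂ :=
  HahnSeries.single (1 : ℤ) ((q - 1)⁻¹) * (hLS q F - F)



section Aux

lemma hP_hP (a b : ℂ) (f : Polynomial ℂ) : hP b (hP a f) = hP (a * b) f := by
  simp only [hP, AlgHom.toLinearMap_apply]
  rw [← Polynomial.aeval_algHom_apply]
  congr 1
  rw [map_mul, aeval_C, aeval_X, Polynomial.algebraMap_eq, ← mul_assoc, ← C_mul]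

lemma hP_one (f : Polynomial ℂ) : hP 1 f = f := by
  simp only [hP, AlgHom.toLinearMap_apply, map_one, one_mul]
  exact aeval_X_left_apply f

lemma hP_inv (a : ℂ) (ha : a ≠ 0) (f : Polynomial ℂ) : hP a⁻¹ (hP a f) = f := by
  rw [hP_hP, mul_inv_cancel₀ ha, hP_one]

lemma hP_mul (a : ℂ) (f g : Polynomial ℂ) : hP a (f * g) = hP a f * hP a g := by
  simp [hP]

lemma hP_X_pow (a : ℂ) (n : ℕ) : hP a (X ^ n) = (a ^ n) • X ^ n := by
  simp only [hP, AlgHom.toLinearMap_apply, map_pow, aeval_X]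
  rw [mul_pow, ← C_pow, smul_eq_C_mul]

lemma hP_C (a c : ℂ) : hP a (C c) = C c := by simp [hP]

lemma hP_X (a : ℂ) : hP a X = C a * X := by simp [hP]

lemma eval_zero_hP (a : ℂ) (f : Polynomial ℂ) : (hP a f).eval 0 = f.eval 0 := by
  induction f using Polynomial.induction_on' with
  | add p q hp hq => simp [hp, hq]
  | monomial n c =>
    rw [← C_mul_X_pow_eq_monomial, hP_mul, hP_C, hP_X_pow]
    cases n <;> simp

lemma X_mul_thetaP (f : Polynomial ℂ) : X * thetaP 0 f = f - C (f.eval 0) := by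
  have hdvd : X ∣ (f - C (f.eval 0)) := by
    rw [Polynomial.X_dvd_iff]
    simp [Polynomial.coeff_zero_eq_eval_zero]
  have h0 : (f - C (f.eval 0)) %ₘ X = 0 :=
    (Polynomial.modByMonic_eq_zero_iff_dvd (monic_X)).2 hdvd
  have := Polynomial.modByMonic_eq_sub_mul_div (f - C (f.eval 0)) (X : Polynomial ℂ)
  rw [h0] at this
  have : X * ((f - C (f.eval 0)) /ₘ X) = f - C (f.eval 0) := by linear_combination this
  simpa [thetaP] using this

lemma thetaP_eq_of (g h : Polynomial ℂ) (hX : X * h = g - C (g.eval 0)) :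
    thetaP 0 g = h := by
  have := X_mul_thetaP g
  exact mul_left_cancel₀ (Polynomial.X_ne_zero) (by rw [this, hX])

lemma hP_thetaP (a : ℂ) (ha : a ≠ 0) (f : Polynomial ℂ) :
    hP a⁻¹ (thetaP 0 f) = a • thetaP 0 (hP a⁻¹ f) := by
  have h1 : hP a⁻¹ (X * thetaP 0 f) = (C a⁻¹ * X) * hP a⁻¹ (thetaP 0 f) := by
    rw [hP_mul, hP_X]
  rw [X_mul_thetaP, map_sub, hP_C] at h1
  have key : thetaP 0 (hP a⁻¹ f) = a⁻¹ • hP a⁻¹ (thetaP 0 f) := by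
    apply thetaP_eq_of
    rw [eval_zero_hP, mul_smul_comm, smul_eq_C_mul, ← mul_assoc, ← h1]
  rw [key, smul_smul, mul_inv_cancel₀ ha, one_smul]

lemma hP_HqP (q a : ℂ) (ha : a ≠ 0) (f : Polynomial ℂ) :
    hP a⁻¹ (HqP q f) = a • HqP q (hP a⁻¹ f) := by
  simp only [HqP, LinearMap.smul_apply, LinearMap.comp_apply, LinearMap.sub_apply,
    LinearMap.id_apply, map_smul]
  rw [hP_thetaP a ha, map_sub, hP_hP, mul_comm q a⁻¹, ← hP_hP, smul_comm]

lemma hF_apply (a : ℂ) (u : PForm) (f : Polynomial ℂ) : hF a u f = u (hP a f) := rfl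

lemma mF_apply (g : Polynomial ℂ) (u : PForm) (f : Polynomial ℂ) : mF g u f = u (g * f) := rfl

lemma divF_apply (u : PForm) (f : Polynomial ℂ) : divF 0 u f = u (thetaP 0 f) := rfl

lemma cF_apply (u v : PForm) (f : Polynomial ℂ) : cF u v f = u (lmul v f) := rfl

lemma HqF_apply (q : ℂ) (u : PForm) (f : Polynomial ℂ) : HqF q u f = -(u (HqP q f)) := rfl

lemma hF_swap (q a : ℂ) (u : PForm) : hF q (hF a⁻¹ u) = hF a⁻¹ (hF q u) := by
  refine LinearMap.ext fun f => ?_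
  simp only [hF_apply, hP_hP, mul_comm]

lemma kern_hF (b : ℂ) (v : PForm) (n : ℕ) :
    hP b (kern (hF b v) n) = b ^ n • kern v n := by
  rw [kern, kern, map_sum, Finset.smul_sum]
  refine Finset.sum_congr rfl fun i hi => ?_
  rw [Finset.mem_range, Nat.lt_succ_iff] at hi
  rw [hP_mul, hP_C, hP_X_pow, hF_apply, hP_X_pow, map_smul, smul_eq_mul,
    smul_eq_C_mul, smul_eq_C_mul, ← mul_assoc, ← mul_assoc, ← C_mul, ← C_mul]
  congr 2
  rw [mul_comm (b ^ (n - i)), mul_assoc, ← pow_add, Nat.sub_add_cancel hi, mul_comm]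

lemma lmul_monomial (w : PForm) (n : ℕ) (c : ℂ) :
    lmul w ((Polynomial.monomial n) c) = c • kern w n := by
  show ((Polynomial.monomial n) c).sum (fun j a => a • kern w j) = c • kern w n
  rw [Polynomial.sum_monomial_index]
  exact zero_smul ℂ _

lemma lmul_hP (b : ℂ) (v : PForm) (g : Polynomial ℂ) :
    hP b (lmul (hF b v) g) = lmul v (hP b g) := by
  induction g using Polynomial.induction_on' with
  | add p q hp hq => simp only [map_add, hp, hq]
  | monomial n c =>
    rw [lmul_monomial, map_smul, kern_hF, ← C_mul_X_pow_eq_monomial, hP_mul, hP_C,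
      hP_X_pow, ← smul_eq_C_mul, map_smul, map_smul, X_pow_eq_monomial, lmul_monomial,
      one_smul]

end Aux

/-- the shifted form `û = h_{a⁻¹}u` satisfies the shifted
q-difference equation. -/
theorem shifted_LHeq (q : ℂ) (hq0 : q ≠ 0) (hq : ∀ n : ℕ, 1 ≤ n → q ^ n ≠ 1)
    (a : ℂ) (ha : a ≠ 0) (u : PForm) (Φ Ψ B : Polynomial ℂ) (hΦ : Φ.Monic)
    (heq : LHeq q u Φ Ψ B) :
    LHeq q (hF a⁻¹ u)
      (a ^ (-(Φ.natDegree : ℤ)) • hP a Φ)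
      (a ^ (1 - (Φ.natDegree : ℤ)) • hP a Ψ)
      (a ^ (-(Φ.natDegree : ℤ)) • hP a B) := by
  rw [LHeq] at heq ⊢
  refine LinearMap.ext fun f => ?_
  have heq' := LinearMap.congr_fun heq (hP a⁻¹ f)
  simp only [LinearMap.add_apply, LinearMap.zero_apply, HqF_apply, mF_apply, divF_apply,
    cF_apply, hF_apply] at heq' ⊢
  rw [hF_swap, smul_mul_assoc, smul_mul_assoc, smul_mul_assoc, map_smul, map_smul,
    map_smul, map_smul, hP_mul, hP_mul, hP_inv a ha, hP_inv a ha, hP_HqP q a ha,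
    lmul_hP, map_smul (thetaP 0), map_smul (hP a⁻¹), hP_thetaP a ha, hP_mul, hP_inv a ha]
  have hz : a ^ (1 - (Φ.natDegree : ℤ)) = a ^ (-(Φ.natDegree : ℤ)) * a := by
    rw [sub_eq_neg_add, zpow_add_one₀ ha]
  simp only [map_smul, smul_eq_mul, mul_smul_comm, hz]
  linear_combination (a ^ (-(Φ.natDegree : ℤ)) * a) * heq'

end QLH

end
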